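/- Let K be a nonempty compact topological space and Γ ⊆ K a nonempty closed subset. Let U_r be a finite-dimensional linear subspace of C(K, ℝ) such that every u ∈ U_r satisfies the maximum principle sup_{x ∈ K} |u(x)| ≤ sup_{y ∈ Γ} |u(y)|. Then there exists a finite set X ⊆ Γ such that for every u ∈ U_r one has sup_{x ∈ K} |u(x)| ≤ 2 · max_{y ∈ X} |u(y)|. -/

import Mathlib

/-- Theorem 6 (TheTrefftz): if every function in the finite-dimensional trial space
`Ur ⊆ C(K, ℝ)` satisfies a maximum principle with respect to the closed boundary part
`Γ ⊆ K`, then there is a finite set of test points on `Γ` that is norming for `Ur`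
with stability constant 2. -/
theorem trefftz_boundary_norming_set
    {K : Type*} [TopologicalSpace K] [CompactSpace K] [Nonempty K]
    (Γ : Set K) (hΓcl : IsClosed Γ) (hΓne : Γ.Nonempty)
    (Ur : Submodule ℝ C(K, ℝ)) [FiniteDimensional ℝ Ur]
    (hmax : ∀ u ∈ Ur, ‖u‖ ≤ ⨆ y : Γ, |u (y : K)|) :
    ∃ (X : Finset K) (hX : X.Nonempty), ↑X ⊆ Γ ∧
      ∀ u ∈ Ur, ‖u‖ ≤ 2 * X.sup' hX (fun y => |u y|) := by
  classical
  have hΓcpt : IsCompact Γ := hΓcl.isCompact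
  -- For each norm-one element of Ur, choose a boundary point where |u| ≥ 1.
  have key : ∀ u : Ur, ‖u‖ = 1 → ∃ y ∈ Γ, 1 ≤ |(u : C(K, ℝ)) y| := by
    intro u hu
    obtain ⟨y, hyΓ, hy⟩ := hΓcpt.exists_isMaxOn hΓne
      (((u : C(K, ℝ)).continuous.abs).continuousOn)
    refine ⟨y, hyΓ, ?_⟩
    have h1 : ‖(u : C(K, ℝ))‖ ≤ ⨆ z : Γ, |(u : C(K, ℝ)) z| := hmax u u.2
    have h2 : (⨆ z : Γ, |(u : C(K, ℝ)) z|) ≤ |(u : C(K, ℝ)) y| := by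
      haveI : Nonempty Γ := hΓne.to_subtype
      exact ciSup_le fun z => hy z.2
    have : ‖u‖ = ‖(u : C(K, ℝ))‖ := rfl
    linarith [this ▸ hu]
  choose Y hYΓ hY1 using key
  -- Compact sphere
  let S := Metric.sphere (0 : Ur) 1
  have hScpt : IsCompact S := isCompact_sphere 0 1
  have hcover : S ⊆ ⋃ u : S, Metric.ball (u : Ur) (1/2) := by
    intro w hw
    exact Set.mem_iUnion.2 ⟨⟨w, hw⟩, by simp [Metric.mem_ball]⟩
  obtain ⟨t, ht⟩ := hScpt.elim_finite_subcover (fun u : S => Metric.ball (u : Ur) (1/2))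
    (fun _ => Metric.isOpen_ball) hcover
  obtain ⟨y0, hy0⟩ := hΓne
  set X : Finset K := insert y0 (t.image fun i =>
    Y i.1 (mem_sphere_zero_iff_norm.mp i.2)) with hX
  have hXne : X.Nonempty := ⟨y0, Finset.mem_insert_self _ _⟩
  refine ⟨X, hXne, ?_, ?_⟩
  · intro z hz
    rcases Finset.mem_insert.1 hz with h | h
    · exact h ▸ hy0
    · obtain ⟨i, _, rfl⟩ := Finset.mem_image.1 h
      exact hYΓ _ _
  · intro v hv
    by_cases hv0 : v = 0
    · subst hv0
      simp [Finset.sup'_const]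
    · have hvne : (⟨v, hv⟩ : Ur) ≠ 0 := by
        simp [Subtype.ext_iff, hv0]
      have hnv : ‖(⟨v, hv⟩ : Ur)‖ ≠ 0 := norm_ne_zero_iff.2 hvne
      have hnvpos : (0:ℝ) < ‖(⟨v, hv⟩ : Ur)‖ := norm_pos_iff.2 hvne
      set w : Ur := ‖(⟨v, hv⟩ : Ur)‖⁻¹ • (⟨v, hv⟩ : Ur) with hwdef
      have hwn : ‖w‖ = 1 := by
        show ‖(w : C(K,ℝ))‖ = 1
        rw [hwdef, Submodule.coe_smul, norm_smul, Real.norm_eq_abs, abs_of_pos (inv_pos.2 hnvpos)]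
        exact inv_mul_cancel₀ hnv
      have hwS : w ∈ S := by simp [S, Metric.mem_sphere]; exact hwn
      obtain ⟨i, hit, hwi⟩ := Set.mem_iUnion₂.1 (ht hwS)
      have hin : ‖(i : Ur)‖ = 1 := by
        exact mem_sphere_zero_iff_norm.mp i.2
      set y := Y (i : Ur) hin with hydef
      have hyX : y ∈ X := Finset.mem_insert_of_mem (Finset.mem_image.2 ⟨i, hit, rfl⟩)
      have h1 : (1:ℝ) ≤ |((i : Ur) : C(K, ℝ)) y| := hY1 _ hin
      have hdist : ‖w - (i : Ur)‖ < 1/2 := by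
        simpa [dist_eq_norm] using hwi
      have hpt : |((w : C(K,ℝ)) - ((i : Ur) : C(K,ℝ))) y| ≤ ‖w - (i : Ur)‖ := by
        have := ContinuousMap.norm_coe_le_norm ((w : C(K,ℝ)) - ((i : Ur) : C(K,ℝ))) y
        rw [← Real.norm_eq_abs]; exact this
      have hwy : (1/2 : ℝ) ≤ |(w : C(K,ℝ)) y| := by
        have habs : |((i : Ur) : C(K, ℝ)) y| - |(w : C(K,ℝ)) y| ≤
            |((w : C(K,ℝ)) - ((i : Ur) : C(K,ℝ))) y| := by
          have := abs_sub_abs_le_abs_sub (((i : Ur) : C(K, ℝ)) y) ((w : C(K,ℝ)) y)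
          simpa [abs_sub_comm] using this
        linarith
      have hwv : (w : C(K,ℝ)) y = ‖(⟨v, hv⟩ : Ur)‖⁻¹ * v y := by
        rw [hwdef, Submodule.coe_smul, ContinuousMap.smul_apply, smul_eq_mul]
      have hvy : ‖(⟨v, hv⟩ : Ur)‖ ≤ 2 * |v y| := by
        have : |(w : C(K,ℝ)) y| = ‖(⟨v, hv⟩ : Ur)‖⁻¹ * |v y| := by
          rw [hwv, abs_mul, abs_of_pos (inv_pos.2 hnvpos)]
        rw [this] at hwy
        have h := mul_le_mul_of_nonneg_left hwy hnvpos.le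
        rw [mul_inv_cancel_left₀ hnv] at h
        linarith
    -- conclude
      have hsup : |v y| ≤ X.sup' hXne (fun z => |v z|) :=
        Finset.le_sup' (f := fun z => |v z|) hyX
      have hnorm : ‖v‖ = ‖(⟨v, hv⟩ : Ur)‖ := rfl
      linarith
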